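/- Suppose A, B, C partition {1,...,p} and C separates A and B in a graph G over which the density of X factors (so X_A and X_B are conditionally independent given X_C). Suppose X̃ satisfies X̃_C = X_C almost surely, conditional pairwise exchangeability within each block: (X_D, X̃_D) ≐ (X_D, X̃_D)_{swap(j)} given X_C for each j ∈ D and D ∈ {A, B}, and (X_A, X̃_A) ⊥ (X_B, X̃_B) | X_C. Then (X, X̃) satisfies unconditional pairwise exchangeability: (X, X̃) ≐ (X, X̃)_{swap(j)} for every j ∈ {1,...,p}. -/

import Mathlib

open MeasureTheory ProbabilityTheory

/-- Restriction of a vector-valued map to the coordinates in `D`. -/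
def restr {Ω : Type*} {p : ℕ} (D : Finset (Fin p)) (X : Ω → Fin p → ℝ) :
    Ω → {i : Fin p // i ∈ D} → ℝ :=
  fun ω i => X ω i

/-- Swap the `j`-th coordinates of a pair of full vectors. -/
noncomputable def swapPair {p : ℕ} (j : Fin p) :
    ((Fin p → ℝ) × (Fin p → ℝ)) → ((Fin p → ℝ) × (Fin p → ℝ)) :=
  fun z => (Function.update z.1 j (z.2 j), Function.update z.2 j (z.1 j))

/-- Swap the coordinate `j ∈ D` of a pair of `D`-indexed vectors. -/
noncomputable def swapBlock {p : ℕ} (D : Finset (Fin p)) (j : Fin p)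
    (hj : j ∈ D) :
    (({i : Fin p // i ∈ D} → ℝ) × ({i : Fin p // i ∈ D} → ℝ)) →
      (({i : Fin p // i ∈ D} → ℝ) × ({i : Fin p // i ∈ D} → ℝ)) :=
  fun z => (Function.update z.1 ⟨j, hj⟩ (z.2 ⟨j, hj⟩),
            Function.update z.2 ⟨j, hj⟩ (z.1 ⟨j, hj⟩))


lemma key_lemma {Ω α β γ : Type*} [mΩ : MeasurableSpace Ω] [StandardBorelSpace Ω]
    [mα : MeasurableSpace α] [MeasurableSpace β] [MeasurableSpace γ]
    (μ : Measure Ω) [IsProbabilityMeasure μ]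
    {W : Ω → α} {Y : Ω → β} {Z : Ω → γ} {s : β → β}
    (hW : Measurable W) (hY : Measurable Y) (hZ : Measurable Z) (hs : Measurable s)
    (hmap : μ.map (fun ω => (W ω, s (Y ω))) = μ.map (fun ω => (W ω, Y ω)))
    (hCI : CondIndepFun (MeasurableSpace.comap W mα)
      (MeasurableSpace.comap_le_iff_le_map.2 hW.le_map) Y Z μ) :
    μ.map (fun ω => (W ω, s (Y ω), Z ω)) = μ.map (fun ω => (W ω, Y ω, Z ω)) := by
  have hm' : MeasurableSpace.comap W mα ≤ mΩ :=
    MeasurableSpace.comap_le_iff_le_map.2 hW.le_map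
  have hsY : Measurable fun ω => s (Y ω) := hs.comp hY
  have hCI' : CondIndepFun (MeasurableSpace.comap W mα) hm' (fun ω => s (Y ω)) Z μ := by
    have := hCI.comp hs measurable_id
    exact this
  -- measure of intersections with comap-measurable sets
  have hmeas_inter : ∀ (S : Set α) (T : Set β), MeasurableSet S → MeasurableSet T →
      μ (W ⁻¹' S ∩ (fun ω => s (Y ω)) ⁻¹' T) = μ (W ⁻¹' S ∩ Y ⁻¹' T) := by
    intro S T hS hT
    have h1 := congrArg (fun ν : Measure (α × β) => ν (S ×ˢ T)) hmap
    simpa [Measure.map_apply (hW.prodMk hsY) (hS.prod hT),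
      Measure.map_apply (hW.prodMk hY) (hS.prod hT), Set.mk_preimage_prod]
      using h1
  -- equality of conditional expectations of indicators
  have hcond : ∀ T : Set β, MeasurableSet T →
      (μ⟦(fun ω => s (Y ω)) ⁻¹' T | MeasurableSpace.comap W mα⟧)
        =ᵐ[μ] (μ⟦Y ⁻¹' T | MeasurableSpace.comap W mα⟧) := by
    intro T hT
    have hint : Integrable (((fun ω => s (Y ω)) ⁻¹' T).indicator (fun _ => (1:ℝ))) μ :=
      (integrable_const 1).indicator (hsY hT)
    refine ((ae_eq_condExp_of_forall_setIntegral_eq hm' hint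
      (fun w _ _ => integrable_condExp.integrableOn) ?_
      stronglyMeasurable_condExp.aestronglyMeasurable).symm)
    rintro _ ⟨S, hS, rfl⟩ -
    rw [setIntegral_condExp hm' ((integrable_const 1).indicator (hY hT)) ⟨S, hS, rfl⟩]
    rw [integral_indicator (hY hT), integral_indicator (hsY hT)]
    simp only [setIntegral_const, smul_eq_mul, mul_one, measureReal_def]
    rw [Measure.restrict_apply (hY hT), Measure.restrict_apply (hsY hT),
      Set.inter_comm (Y ⁻¹' T), Set.inter_comm ((fun ω => s (Y ω)) ⁻¹' T),
      hmeas_inter S T hS hT]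
  -- rectangle computation
  have hrect : ∀ (Y' : Ω → β), Measurable Y' →
      CondIndepFun (MeasurableSpace.comap W mα) hm' Y' Z μ →
      ∀ (S : Set α) (T : Set β) (U : Set γ),
      MeasurableSet S → MeasurableSet T → MeasurableSet U →
      (μ (W ⁻¹' S ∩ (Y' ⁻¹' T ∩ Z ⁻¹' U))).toReal
        = ∫ x in W ⁻¹' S,
            (μ⟦Y' ⁻¹' T | MeasurableSpace.comap W mα⟧) x
              * (μ⟦Z ⁻¹' U | MeasurableSpace.comap W mα⟧) x ∂μ := by
    intro Y' hY' hCIY' S T U hS hT hU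
    have hTU : MeasurableSet (Y' ⁻¹' T ∩ Z ⁻¹' U) := (hY' hT).inter (hZ hU)
    have h1 : (μ (W ⁻¹' S ∩ (Y' ⁻¹' T ∩ Z ⁻¹' U))).toReal
        = ∫ x in W ⁻¹' S, ((Y' ⁻¹' T ∩ Z ⁻¹' U).indicator (fun _ => (1:ℝ))) x ∂μ := by
      rw [integral_indicator hTU]
      simp only [setIntegral_const, smul_eq_mul, mul_one, measureReal_def]
      rw [Measure.restrict_apply hTU, Set.inter_comm]
    rw [h1, ← setIntegral_condExp hm' ((integrable_const 1).indicator hTU) ⟨S, hS, rfl⟩]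
    refine integral_congr_ae (ae_restrict_of_ae ?_)
    exact (condIndepFun_iff_condExp_inter_preimage_eq_mul hY' hZ).1 hCIY' T U hT hU
  -- π-system extension
  have hmsY : Measurable fun ω => (W ω, s (Y ω), Z ω) := hW.prodMk (hsY.prodMk hZ)
  have hmY : Measurable fun ω => (W ω, Y ω, Z ω) := hW.prodMk (hY.prodMk hZ)
  have hP1 : IsProbabilityMeasure (μ.map fun ω => (W ω, s (Y ω), Z ω)) :=
    Measure.isProbabilityMeasure_map hmsY.aemeasurable
  have hP2 : IsProbabilityMeasure (μ.map fun ω => (W ω, Y ω, Z ω)) :=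
    Measure.isProbabilityMeasure_map hmY.aemeasurable
  refine ext_of_generate_finite
    (Set.image2 (· ×ˢ ·) {S : Set α | MeasurableSet S}
      (Set.image2 (· ×ˢ ·) {T : Set β | MeasurableSet T} {U : Set γ | MeasurableSet U}))
    ?_ ?_ ?_ (by simp)
  · exact (generateFrom_eq_prod MeasurableSpace.generateFrom_measurableSet generateFrom_prod
      isCountablySpanning_measurableSet
      (isCountablySpanning_measurableSet.prod isCountablySpanning_measurableSet)).symm
  · exact MeasurableSpace.isPiSystem_measurableSet.prod isPiSystem_prod
  · rintro _ ⟨S, hS, _, ⟨T, hT, U, hU, rfl⟩, rfl⟩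
    rw [Measure.map_apply hmsY (hS.prod (hT.prod hU)),
      Measure.map_apply hmY (hS.prod (hT.prod hU))]
    have hpre : ∀ Y' : Ω → β, (fun ω => (W ω, Y' ω, Z ω)) ⁻¹' (S ×ˢ T ×ˢ U)
        = W ⁻¹' S ∩ (Y' ⁻¹' T ∩ Z ⁻¹' U) := by
      intro Y'; ext ω; simp [Set.mem_prod, Set.mem_inter_iff, and_assoc]
    rw [hpre, hpre]
    have h2 := hrect (fun ω => s (Y ω)) hsY hCI' S T U hS hT hU
    have h3 := hrect Y hY hCI S T U hS hT hU
    have h4 : ∫ x in W ⁻¹' S,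
          (μ⟦(fun ω => s (Y ω)) ⁻¹' T | MeasurableSpace.comap W mα⟧) x
            * (μ⟦Z ⁻¹' U | MeasurableSpace.comap W mα⟧) x ∂μ
        = ∫ x in W ⁻¹' S,
          (μ⟦Y ⁻¹' T | MeasurableSpace.comap W mα⟧) x
            * (μ⟦Z ⁻¹' U | MeasurableSpace.comap W mα⟧) x ∂μ := by
      refine integral_congr_ae (ae_restrict_of_ae ?_)
      filter_upwards [hcond T hT] with x hx
      rw [hx]
    have := h2.trans (h4.trans h3.symm)
    exact (ENNReal.toReal_eq_toReal_iff' (measure_ne_top μ _) (measure_ne_top μ _)).1 this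

noncomputable def build {p : ℕ} (A B C : Finset (Fin p))
    (a : {i : Fin p // i ∈ A} → ℝ) (b : {i : Fin p // i ∈ B} → ℝ)
    (c : {i : Fin p // i ∈ C} → ℝ) : Fin p → ℝ :=
  fun i => if h : i ∈ A then a ⟨i, h⟩ else if h' : i ∈ B then b ⟨i, h'⟩
    else if h'' : i ∈ C then c ⟨i, h''⟩ else 0

noncomputable def F2 {p : ℕ} (A B C : Finset (Fin p)) :
    (({i : Fin p // i ∈ C} → ℝ) ×
      ((({i : Fin p // i ∈ A} → ℝ) × ({i : Fin p // i ∈ A} → ℝ)) ×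
        (({i : Fin p // i ∈ B} → ℝ) × ({i : Fin p // i ∈ B} → ℝ)))) →
      ((Fin p → ℝ) × (Fin p → ℝ)) :=
  fun z => (build A B C z.2.1.1 z.2.2.1 z.1, build A B C z.2.1.2 z.2.2.2 z.1)

lemma measurable_restr {Ω : Type*} [MeasurableSpace Ω] {p : ℕ} (D : Finset (Fin p))
    {X : Ω → Fin p → ℝ} (hX : Measurable X) : Measurable (restr D X) :=
  measurable_pi_lambda _ fun i => (measurable_pi_apply (i : Fin p)).comp hX

lemma measurable_swapBlock {p : ℕ} (D : Finset (Fin p)) (j : Fin p) (hj : j ∈ D) :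
    Measurable (swapBlock D j hj) := by
  classical
  apply Measurable.prodMk <;>
  · refine measurable_pi_lambda _ fun i => ?_
    by_cases h : i = ⟨j, hj⟩ <;>
      simp only [Function.update_apply, h, if_pos, if_neg, if_true, if_false] <;>
      exact (measurable_pi_apply _).comp (by measurability)

lemma measurable_F2 {p : ℕ} (A B C : Finset (Fin p)) : Measurable (F2 A B C) := by
  classical
  have hc : Measurable fun z : ({i : Fin p // i ∈ C} → ℝ) ×
      ((({i : Fin p // i ∈ A} → ℝ) × ({i : Fin p // i ∈ A} → ℝ)) ×
        (({i : Fin p // i ∈ B} → ℝ) × ({i : Fin p // i ∈ B} → ℝ))) => z.1 :=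
    measurable_fst
  apply Measurable.prodMk <;>
  · refine measurable_pi_lambda _ fun i => ?_
    unfold build
    split_ifs <;> fun_prop

lemma swap_buildA {p : ℕ} (A B C : Finset (Fin p)) (j : Fin p) (hj : j ∈ A)
    (a1 a2 : {i : Fin p // i ∈ A} → ℝ) (b1 b2 : {i : Fin p // i ∈ B} → ℝ)
    (c : {i : Fin p // i ∈ C} → ℝ) :
    swapPair j (build A B C a1 b1 c, build A B C a2 b2 c)
      = (build A B C (Function.update a1 ⟨j, hj⟩ (a2 ⟨j, hj⟩)) b1 c,
         build A B C (Function.update a2 ⟨j, hj⟩ (a1 ⟨j, hj⟩)) b2 c) := by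
  classical
  unfold swapPair build
  dsimp only
  refine Prod.ext ?_ ?_ <;>
  · dsimp only
    funext i
    by_cases hij : i = j
    · subst hij
      simp [hj, Function.update_self]
    · rw [Function.update_of_ne hij]
      by_cases hA : i ∈ A
      · simp only [hA, dif_pos]
        rw [Function.update_of_ne (by simp [Subtype.ext_iff, hij])]
      · simp [hA]

lemma swap_buildB {p : ℕ} (A B C : Finset (Fin p)) (hAB : Disjoint A B)
    (j : Fin p) (hj : j ∈ B)
    (a1 a2 : {i : Fin p // i ∈ A} → ℝ) (b1 b2 : {i : Fin p // i ∈ B} → ℝ)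
    (c : {i : Fin p // i ∈ C} → ℝ) :
    swapPair j (build A B C a1 b1 c, build A B C a2 b2 c)
      = (build A B C a1 (Function.update b1 ⟨j, hj⟩ (b2 ⟨j, hj⟩)) c,
         build A B C a2 (Function.update b2 ⟨j, hj⟩ (b1 ⟨j, hj⟩)) c) := by
  classical
  have hjA : j ∉ A := fun h => (Finset.disjoint_left.1 hAB h) hj
  unfold swapPair build
  dsimp only
  refine Prod.ext ?_ ?_ <;>
  · dsimp only
    funext i
    by_cases hij : i = j
    · subst hij
      simp [hj, hjA, Function.update_self]
    · rw [Function.update_of_ne hij]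
      by_cases hA : i ∈ A
      · simp [hA]
      · by_cases hB : i ∈ B
        · simp only [hA, dif_neg, not_false_iff, hB, dif_pos]
          rw [Function.update_of_ne (by simp [Subtype.ext_iff, hij])]
        · simp [hA, hB]

lemma build_eq {Ω : Type*} {p : ℕ} (A B C : Finset (Fin p))
    (hAB : Disjoint A B) (hAC : Disjoint A C) (hBC : Disjoint B C)
    (hcover : A ∪ B ∪ C = Finset.univ)
    (X V : Ω → Fin p → ℝ) (ω : Ω) (hC : ∀ i ∈ C, V ω i = X ω i) :
    build A B C (restr A V ω) (restr B V ω) (restr C X ω) = V ω := by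
  classical
  funext i
  have hi : i ∈ A ∪ B ∪ C := hcover ▸ Finset.mem_univ i
  unfold build restr
  by_cases hA : i ∈ A
  · simp [hA]
  · by_cases hB : i ∈ B
    · simp [hA, hB]
    · have hC' : i ∈ C := by
        rcases Finset.mem_union.1 hi with h | h
        · rcases Finset.mem_union.1 h with h | h <;> [exact absurd h hA; exact absurd h hB]
        · exact h
      simp [hA, hB, hC', hC i hC']

/-- **Validity of divide-and-conquer knockoffs.** Suppose `A, B, C` partition
the coordinates, `X_A ⊥ X_B | X_C` (as holds when `C` separates `A` and `B` in
a graph over which the density of `X` factors), `X̃_C = X_C` a.s., within each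
block `D ∈ {A, B}` the conditional law of `(X_D, X̃_D)` given `X_C` is
invariant under swapping any single coordinate `j ∈ D`, and
`(X_A, X̃_A) ⊥ (X_B, X̃_B) | X_C`. Then `(X, X̃)` satisfies unconditional
pairwise exchangeability. -/
theorem stmt11 {Ω : Type*} [MeasurableSpace Ω] [StandardBorelSpace Ω]
    (μ : Measure Ω) [IsProbabilityMeasure μ] {p : ℕ}
    (A B C : Finset (Fin p))
    (hAB : Disjoint A B) (hAC : Disjoint A C) (hBC : Disjoint B C)
    (hcover : A ∪ B ∪ C = Finset.univ)
    (X Xt : Ω → Fin p → ℝ) (hX : Measurable X) (hXt : Measurable Xt)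
    (hXC : Measurable (restr C X))
    (hCeq : ∀ᵐ ω ∂μ, ∀ i ∈ C, Xt ω i = X ω i)
    (hCI : CondIndepFun (MeasurableSpace.comap (restr C X) inferInstance)
      (MeasurableSpace.comap_le_iff_le_map.2 hXC.le_map)
      (restr A X) (restr B X) μ)
    (hCIknock : CondIndepFun
      (MeasurableSpace.comap (restr C X) inferInstance)
      (MeasurableSpace.comap_le_iff_le_map.2 hXC.le_map)
      (fun ω => (restr A X ω, restr A Xt ω))
      (fun ω => (restr B X ω, restr B Xt ω)) μ)
    (hswapA : ∀ (j : Fin p) (hj : j ∈ A),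
      μ.map (fun ω => (restr C X ω,
          swapBlock A j hj (restr A X ω, restr A Xt ω))) =
        μ.map (fun ω => (restr C X ω, (restr A X ω, restr A Xt ω))))
    (hswapB : ∀ (j : Fin p) (hj : j ∈ B),
      μ.map (fun ω => (restr C X ω,
          swapBlock B j hj (restr B X ω, restr B Xt ω))) =
        μ.map (fun ω => (restr C X ω, (restr B X ω, restr B Xt ω)))) :
    ∀ j : Fin p,
      μ.map (fun ω => swapPair j (X ω, Xt ω)) =
        μ.map (fun ω => (X ω, Xt ω)) := by
  classical
  intro j
  have hWA : Measurable (restr A X) := measurable_restr A hX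
  have hWB : Measurable (restr B X) := measurable_restr B hX
  have hWAt : Measurable (restr A Xt) := measurable_restr A hXt
  have hWBt : Measurable (restr B Xt) := measurable_restr B hXt
  have hYA : Measurable fun ω => (restr A X ω, restr A Xt ω) := hWA.prodMk hWAt
  have hYB : Measurable fun ω => (restr B X ω, restr B Xt ω) := hWB.prodMk hWBt
  have hF2 := measurable_F2 A B C
  have hids : ∀ᵐ ω ∂μ, (X ω, Xt ω)
      = F2 A B C (restr C X ω, (restr A X ω, restr A Xt ω),
          (restr B X ω, restr B Xt ω)) := by
    filter_upwards [hCeq] with ω hω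
    unfold F2
    dsimp only
    refine Prod.ext ?_ ?_
    · exact (build_eq A B C hAB hAC hBC hcover X X ω (fun i _ => rfl)).symm
    · exact (build_eq A B C hAB hAC hBC hcover X Xt ω hω).symm
  have hj' : j ∈ A ∪ B ∪ C := hcover ▸ Finset.mem_univ j
  rcases Finset.mem_union.1 hj' with hj2 | hjC
  · rcases Finset.mem_union.1 hj2 with hjA | hjB
    · -- j ∈ A
      have hkey : μ.map (fun ω => (restr C X ω,
            swapBlock A j hjA (restr A X ω, restr A Xt ω),
            (restr B X ω, restr B Xt ω)))
          = μ.map (fun ω => (restr C X ω, (restr A X ω, restr A Xt ω),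
            (restr B X ω, restr B Xt ω))) :=
        key_lemma μ hXC hYA hYB (measurable_swapBlock A j hjA)
          (hswapA j hjA) hCIknock
      have h1 : (fun ω => swapPair j (X ω, Xt ω)) =ᵐ[μ]
          fun ω => F2 A B C (restr C X ω,
            swapBlock A j hjA (restr A X ω, restr A Xt ω),
            (restr B X ω, restr B Xt ω)) := by
        filter_upwards [hids] with ω hω
        rw [hω]
        unfold F2 swapBlock
        dsimp only
        exact swap_buildA A B C j hjA _ _ _ _ _
      calc μ.map (fun ω => swapPair j (X ω, Xt ω))
          = μ.map (fun ω => F2 A B C (restr C X ω,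
              swapBlock A j hjA (restr A X ω, restr A Xt ω),
              (restr B X ω, restr B Xt ω))) := Measure.map_congr h1
        _ = (μ.map (fun ω => (restr C X ω,
              swapBlock A j hjA (restr A X ω, restr A Xt ω),
              (restr B X ω, restr B Xt ω)))).map (F2 A B C) :=
            (Measure.map_map hF2 (hXC.prodMk
              ((((measurable_swapBlock A j hjA)).comp hYA).prodMk hYB))).symm
        _ = (μ.map (fun ω => (restr C X ω, (restr A X ω, restr A Xt ω),
              (restr B X ω, restr B Xt ω)))).map (F2 A B C) := by rw [hkey]
        _ = μ.map (fun ω => F2 A B C (restr C X ω, (restr A X ω, restr A Xt ω),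
              (restr B X ω, restr B Xt ω))) :=
            Measure.map_map hF2 (hXC.prodMk (hYA.prodMk hYB))
        _ = μ.map (fun ω => (X ω, Xt ω)) := (Measure.map_congr hids).symm
    · -- j ∈ B
      have hCIsymm : CondIndepFun
          (MeasurableSpace.comap (restr C X) inferInstance)
          (MeasurableSpace.comap_le_iff_le_map.2 hXC.le_map)
          (fun ω => (restr B X ω, restr B Xt ω))
          (fun ω => (restr A X ω, restr A Xt ω)) μ :=
        Kernel.IndepFun.symm hCIknock
      have hkey : μ.map (fun ω => (restr C X ω,
            swapBlock B j hjB (restr B X ω, restr B Xt ω),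
            (restr A X ω, restr A Xt ω)))
          = μ.map (fun ω => (restr C X ω, (restr B X ω, restr B Xt ω),
            (restr A X ω, restr A Xt ω))) :=
        key_lemma μ hXC hYB hYA (measurable_swapBlock B j hjB)
          (hswapB j hjB) hCIsymm
      set F2' : (({i : Fin p // i ∈ C} → ℝ) ×
          ((({i : Fin p // i ∈ B} → ℝ) × ({i : Fin p // i ∈ B} → ℝ)) ×
            (({i : Fin p // i ∈ A} → ℝ) × ({i : Fin p // i ∈ A} → ℝ)))) →
          ((Fin p → ℝ) × (Fin p → ℝ)) :=
        fun z => F2 A B C (z.1, z.2.2, z.2.1) with hF2'def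
      have hF2' : Measurable F2' :=
        hF2.comp (measurable_fst.prodMk
          ((measurable_snd.comp measurable_snd).prodMk
            (measurable_fst.comp measurable_snd)))
      have h1 : (fun ω => swapPair j (X ω, Xt ω)) =ᵐ[μ]
          fun ω => F2' (restr C X ω,
            swapBlock B j hjB (restr B X ω, restr B Xt ω),
            (restr A X ω, restr A Xt ω)) := by
        filter_upwards [hids] with ω hω
        rw [hω]
        simp only [hF2'def]
        unfold F2 swapBlock
        dsimp only
        exact swap_buildB A B C hAB j hjB _ _ _ _ _
      have h2 : (fun ω => (X ω, Xt ω)) =ᵐ[μ]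
          fun ω => F2' (restr C X ω, (restr B X ω, restr B Xt ω),
            (restr A X ω, restr A Xt ω)) := by
        filter_upwards [hids] with ω hω
        rw [hω]
      calc μ.map (fun ω => swapPair j (X ω, Xt ω))
          = μ.map (fun ω => F2' (restr C X ω,
              swapBlock B j hjB (restr B X ω, restr B Xt ω),
              (restr A X ω, restr A Xt ω))) := Measure.map_congr h1
        _ = (μ.map (fun ω => (restr C X ω,
              swapBlock B j hjB (restr B X ω, restr B Xt ω),
              (restr A X ω, restr A Xt ω)))).map F2' :=
            (Measure.map_map hF2' (hXC.prodMk
              ((((measurable_swapBlock B j hjB)).comp hYB).prodMk hYA))).symm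
        _ = (μ.map (fun ω => (restr C X ω, (restr B X ω, restr B Xt ω),
              (restr A X ω, restr A Xt ω)))).map F2' := by rw [hkey]
        _ = μ.map (fun ω => F2' (restr C X ω, (restr B X ω, restr B Xt ω),
              (restr A X ω, restr A Xt ω))) :=
            Measure.map_map hF2' (hXC.prodMk (hYB.prodMk hYA))
        _ = μ.map (fun ω => (X ω, Xt ω)) := (Measure.map_congr h2).symm
  · -- j ∈ C
    have h : (fun ω => swapPair j (X ω, Xt ω)) =ᵐ[μ] fun ω => (X ω, Xt ω) := by
      filter_upwards [hCeq] with ω hω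
      have h1 : Xt ω j = X ω j := hω j hjC
      unfold swapPair
      dsimp only
      refine Prod.ext ?_ ?_
      · rw [h1, Function.update_eq_self]
      · rw [← h1, Function.update_eq_self]
    exact Measure.map_congr h
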